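/- Let m, n ≥ 3 be integers, let k = ℚ(cos(2π/m), cos(2π/n), cos(π/m)·cos(π/n)) as a subfield of ℝ, set s = 2cos(π/n), and let G_{m,n} be the subgroup of SL(2,ℝ) generated by A = [[1, 2cos(π/m) + 2cos(π/n)], [0, 1]] and B = [[2cos(π/m), 1], [−1, 0]]. Call M = [[a,b],[c,d]] ∈ SL(2,ℝ) 'odd' if a, d ∈ s·k and b, c ∈ k. Suppose s ∉ k. If H is a subgroup of G_{m,n} that contains a parabolic element and contains an odd element, then H contains an odd hyperbolic element. -/

import Mathlib

open Real Matrix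

/-- `M` is an 'odd' element: diagonal entries in `s·k`, off-diagonal entries in `k`. -/
def IsOddElt (k : Subfield ℝ) (s : ℝ) (M : Matrix (Fin 2) (Fin 2) ℝ) : Prop :=
  (∃ y ∈ k, M 0 0 = s * y) ∧ (∃ y ∈ k, M 1 1 = s * y) ∧ M 0 1 ∈ k ∧ M 1 0 ∈ k

/-- A matrix in SL(2,ℝ) is parabolic if it is not ±I and has trace of absolute value 2. -/
def IsParabolicMat (M : Matrix (Fin 2) (Fin 2) ℝ) : Prop :=
  M ≠ 1 ∧ M ≠ -1 ∧ |Matrix.trace M| = 2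

/-- `M` is an 'even' element: diagonal entries in `k`, off-diagonal entries in `s·k`. -/
def IsEvenElt (k : Subfield ℝ) (s : ℝ) (M : Matrix (Fin 2) (Fin 2) ℝ) : Prop :=
  M 0 0 ∈ k ∧ M 1 1 ∈ k ∧ (∃ y ∈ k, M 0 1 = s * y) ∧ (∃ y ∈ k, M 1 0 = s * y)

lemma mul_entry (M N : Matrix (Fin 2) (Fin 2) ℝ) (i j : Fin 2) :
    (M * N) i j = M i 0 * N 0 j + M i 1 * N 1 j := by
  rw [Matrix.mul_apply, Fin.sum_univ_two]

lemma even_mul_even {k : Subfield ℝ} {s : ℝ} (hs2 : s * s ∈ k)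
    {M N : Matrix (Fin 2) (Fin 2) ℝ} (hM : IsEvenElt k s M) (hN : IsEvenElt k s N) :
    IsEvenElt k s (M * N) := by
  obtain ⟨h00, h11, ⟨y1, hy1, e1⟩, ⟨y2, hy2, e2⟩⟩ := hM
  obtain ⟨g00, g11, ⟨z1, hz1, f1⟩, ⟨z2, hz2, f2⟩⟩ := hN
  refine ⟨?_, ?_, ⟨M 0 0 * z1 + y1 * N 1 1, add_mem (mul_mem h00 hz1) (mul_mem hy1 g11), ?_⟩,
    ⟨y2 * N 0 0 + M 1 1 * z2, add_mem (mul_mem hy2 g00) (mul_mem h11 hz2), ?_⟩⟩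
  · rw [mul_entry, e1, f2, show M 0 0 * N 0 0 + s * y1 * (s * z2)
      = M 0 0 * N 0 0 + s*s * (y1*z2) by ring]
    exact add_mem (mul_mem h00 g00) (mul_mem hs2 (mul_mem hy1 hz2))
  · rw [mul_entry, e2, f1, show s * y2 * (s * z1) + M 1 1 * N 1 1
      = s*s*(y2*z1) + M 1 1 * N 1 1 by ring]
    exact add_mem (mul_mem hs2 (mul_mem hy2 hz1)) (mul_mem h11 g11)
  · rw [mul_entry, e1, f1]; ring
  · rw [mul_entry, e2, f2]; ring

lemma even_mul_odd {k : Subfield ℝ} {s : ℝ} (hs2 : s * s ∈ k)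
    {M N : Matrix (Fin 2) (Fin 2) ℝ} (hM : IsEvenElt k s M) (hN : IsOddElt k s N) :
    IsOddElt k s (M * N) := by
  obtain ⟨h00, h11, ⟨y1, hy1, e1⟩, ⟨y2, hy2, e2⟩⟩ := hM
  obtain ⟨⟨z1, hz1, f1⟩, ⟨z2, hz2, f2⟩, g01, g10⟩ := hN
  refine ⟨⟨M 0 0 * z1 + y1 * N 1 0, add_mem (mul_mem h00 hz1) (mul_mem hy1 g10), ?_⟩,
    ⟨y2 * N 0 1 + M 1 1 * z2, add_mem (mul_mem hy2 g01) (mul_mem h11 hz2), ?_⟩, ?_, ?_⟩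
  · rw [mul_entry, f1, e1]; ring
  · rw [mul_entry, e2, f2]; ring
  · rw [mul_entry, e1, f2, show M 0 0 * N 0 1 + s * y1 * (s * z2)
      = M 0 0 * N 0 1 + s*s * (y1*z2) by ring]
    exact add_mem (mul_mem h00 g01) (mul_mem hs2 (mul_mem hy1 hz2))
  · rw [mul_entry, e2, f1, show s * y2 * (s * z1) + M 1 1 * N 1 0
      = s*s*(y2*z1) + M 1 1 * N 1 0 by ring]
    exact add_mem (mul_mem hs2 (mul_mem hy2 hz1)) (mul_mem h11 g10)

lemma odd_mul_even {k : Subfield ℝ} {s : ℝ} (hs2 : s * s ∈ k)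
    {M N : Matrix (Fin 2) (Fin 2) ℝ} (hM : IsOddElt k s M) (hN : IsEvenElt k s N) :
    IsOddElt k s (M * N) := by
  obtain ⟨⟨y1, hy1, e1⟩, ⟨y2, hy2, e2⟩, g01, g10⟩ := hM
  obtain ⟨h00, h11, ⟨z1, hz1, f1⟩, ⟨z2, hz2, f2⟩⟩ := hN
  refine ⟨⟨y1 * N 0 0 + M 0 1 * z2, add_mem (mul_mem hy1 h00) (mul_mem g01 hz2), ?_⟩,
    ⟨M 1 0 * z1 + y2 * N 1 1, add_mem (mul_mem g10 hz1) (mul_mem hy2 h11), ?_⟩, ?_, ?_⟩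
  · rw [mul_entry, e1, f2]; ring
  · rw [mul_entry, e2, f1]; ring
  · rw [mul_entry, e1, f1, show s * y1 * (s * z1) + M 0 1 * N 1 1
      = s*s*(y1*z1) + M 0 1 * N 1 1 by ring]
    exact add_mem (mul_mem hs2 (mul_mem hy1 hz1)) (mul_mem g01 h11)
  · rw [mul_entry, e2, f2, show M 1 0 * N 0 0 + s * y2 * (s * z2)
      = M 1 0 * N 0 0 + s*s*(y2*z2) by ring]
    exact add_mem (mul_mem g10 h00) (mul_mem hs2 (mul_mem hy2 hz2))

lemma odd_mul_odd {k : Subfield ℝ} {s : ℝ} (hs2 : s * s ∈ k)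
    {M N : Matrix (Fin 2) (Fin 2) ℝ} (hM : IsOddElt k s M) (hN : IsOddElt k s N) :
    IsEvenElt k s (M * N) := by
  obtain ⟨⟨y1, hy1, e1⟩, ⟨y2, hy2, e2⟩, g01, g10⟩ := hM
  obtain ⟨⟨z1, hz1, f1⟩, ⟨z2, hz2, f2⟩, h01, h10⟩ := hN
  refine ⟨?_, ?_, ⟨y1 * N 0 1 + M 0 1 * z2, add_mem (mul_mem hy1 h01) (mul_mem g01 hz2), ?_⟩,
    ⟨M 1 0 * z1 + y2 * N 1 0, add_mem (mul_mem g10 hz1) (mul_mem hy2 h10), ?_⟩⟩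
  · rw [mul_entry, e1, f1, show s * y1 * (s * z1) + M 0 1 * N 1 0
      = s*s*(y1*z1) + M 0 1 * N 1 0 by ring]
    exact add_mem (mul_mem hs2 (mul_mem hy1 hz1)) (mul_mem g01 h10)
  · rw [mul_entry, e2, f2, show M 1 0 * N 0 1 + s * y2 * (s * z2)
      = M 1 0 * N 0 1 + s*s*(y2*z2) by ring]
    exact add_mem (mul_mem g10 h01) (mul_mem hs2 (mul_mem hy2 hz2))
  · rw [mul_entry, e1, f2]; ring
  · rw [mul_entry, e2, f1]; ring

lemma even_one (k : Subfield ℝ) (s : ℝ) : IsEvenElt k s (1 : Matrix (Fin 2) (Fin 2) ℝ) := by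
  refine ⟨?_, ?_, ⟨0, zero_mem _, ?_⟩, ⟨0, zero_mem _, ?_⟩⟩ <;>
    simp [Matrix.one_apply, one_mem]

lemma even_pow {k : Subfield ℝ} {s : ℝ} (hs2 : s * s ∈ k)
    {M : Matrix (Fin 2) (Fin 2) ℝ} (hM : IsEvenElt k s M) (j : ℕ) :
    IsEvenElt k s (M ^ j) := by
  induction j with
  | zero => simpa using even_one k s
  | succ j ih => rw [pow_succ]; exact even_mul_even hs2 ih hM

lemma even_inv {k : Subfield ℝ} {s : ℝ} (g : Matrix.SpecialLinearGroup (Fin 2) ℝ)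
    (hg : IsEvenElt k s (g : Matrix (Fin 2) (Fin 2) ℝ)) :
    IsEvenElt k s ((g⁻¹ : Matrix.SpecialLinearGroup (Fin 2) ℝ) : Matrix (Fin 2) (Fin 2) ℝ) := by
  obtain ⟨h00, h11, ⟨y1, hy1, e1⟩, ⟨y2, hy2, e2⟩⟩ := hg
  rw [Matrix.SpecialLinearGroup.SL2_inv_expl]
  refine ⟨h11, h00, ⟨-y1, neg_mem hy1, ?_⟩, ⟨-y2, neg_mem hy2, ?_⟩⟩
  · show -(g : Matrix (Fin 2) (Fin 2) ℝ) 0 1 = s * (-y1); rw [e1]; ring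
  · show -(g : Matrix (Fin 2) (Fin 2) ℝ) 1 0 = s * (-y2); rw [e2]; ring

lemma odd_inv {k : Subfield ℝ} {s : ℝ} (g : Matrix.SpecialLinearGroup (Fin 2) ℝ)
    (hg : IsOddElt k s (g : Matrix (Fin 2) (Fin 2) ℝ)) :
    IsOddElt k s ((g⁻¹ : Matrix.SpecialLinearGroup (Fin 2) ℝ) : Matrix (Fin 2) (Fin 2) ℝ) := by
  obtain ⟨⟨y1, hy1, e1⟩, ⟨y2, hy2, e2⟩, h01, h10⟩ := hg
  rw [Matrix.SpecialLinearGroup.SL2_inv_expl]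
  exact ⟨⟨y2, hy2, e2⟩, ⟨y1, hy1, e1⟩, neg_mem h01, neg_mem h10⟩

lemma pow_one_add_nilp (Q : Matrix (Fin 2) (Fin 2) ℝ) (hQ : Q * Q = 0) (j : ℕ) :
    (1 + Q)^j = 1 + (j : ℝ) • Q := by
  induction j with
  | zero => simp
  | succ j ih =>
    rw [pow_succ, ih]
    have : (1 + (j:ℝ) • Q) * (1 + Q) = 1 + Q + (j:ℝ) • Q + (j:ℝ) • (Q * Q) := by
      noncomm_ring
    rw [this, hQ]
    push_cast
    module

lemma trace_one_add_smul_mul (Q E : Matrix (Fin 2) (Fin 2) ℝ) (c : ℝ) :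
    Matrix.trace ((1 + c • Q) * E) = Matrix.trace E + c * Matrix.trace (Q * E) := by
  rw [add_mul, one_mul, Matrix.trace_add, smul_mul_assoc, Matrix.trace_smul, smul_eq_mul]

lemma aux_root0 (e00 e01 e10 e11 v0 v1 : ℝ) (hdet : e00*e11 - e01*e10 = 1)
    (hv : v0 ≠ 0)
    (hcross : v0 * (e10*v0 + e11*v1) = v1 * (e00*v0 + e01*v1)) :
    4 ≤ (e00 + e11)^2 := by
  set μ : ℝ := (e00*v0 + e01*v1)/v0 with hμ
  have h0 : e00*v0 + e01*v1 = μ*v0 := by rw [hμ, div_mul_cancel₀ _ hv]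
  clear_value μ
  have h1 : e10*v0 + e11*v1 = μ*v1 := by
    have : v0 * (e10*v0 + e11*v1) = v0 * (μ * v1) := by rw [hcross, h0]; ring
    exact mul_left_cancel₀ hv this
  have hroot' : (μ^2 - (e00+e11)*μ + 1) * v0 = 0 := by
    linear_combination (e11 - μ) * h0 - e01 * h1 - v0 * hdet
  have hroot : μ^2 - (e00+e11)*μ + 1 = 0 := by
    rcases mul_eq_zero.mp hroot' with h | h
    · exact h
    · exact absurd h hv
  have hμ0 : μ ≠ 0 := by
    intro h; rw [h] at hroot; norm_num at hroot
  have hpos : 0 < μ^2 := lt_of_le_of_ne (sq_nonneg μ) (Ne.symm (pow_ne_zero 2 hμ0))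
  nlinarith [sq_nonneg (μ*μ - 1), hpos, hroot]

lemma aux_root (e00 e01 e10 e11 v0 v1 : ℝ) (hdet : e00*e11 - e01*e10 = 1)
    (hv : v0 ≠ 0 ∨ v1 ≠ 0)
    (hcross : v0 * (e10*v0 + e11*v1) = v1 * (e00*v0 + e01*v1)) :
    4 ≤ (e00 + e11)^2 := by
  rcases hv with h | h
  · exact aux_root0 e00 e01 e10 e11 v0 v1 hdet h hcross
  · have := aux_root0 e11 e10 e01 e00 v1 v0 (by linarith [hdet]) h (by linarith [hcross])
    linarith [this]

lemma nilp_of_parabolic (Pm : Matrix (Fin 2) (Fin 2) ℝ)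
    (hdet : Pm 0 0 * Pm 1 1 - Pm 0 1 * Pm 1 0 = 1) (htr : Pm 0 0 + Pm 1 1 = 2) :
    (Pm - 1) * (Pm - 1) = 0 := by
  ext i j
  fin_cases i <;> fin_cases j <;>
    simp only [mul_entry, Matrix.sub_apply, Matrix.one_apply, Matrix.zero_apply] <;>
    norm_num
  · linear_combination Pm 0 0 * htr - hdet
  · linear_combination Pm 0 1 * htr
  · linear_combination Pm 1 0 * htr
  · linear_combination Pm 1 1 * htr - hdet
theorem stmt10 (m n : ℕ) (hm : 3 ≤ m) (hn : 3 ≤ n)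
    (A B : Matrix.SpecialLinearGroup (Fin 2) ℝ)
    (hA : (A : Matrix (Fin 2) (Fin 2) ℝ) =
      !![1, 2 * Real.cos (Real.pi / (m : ℝ)) + 2 * Real.cos (Real.pi / (n : ℝ)); 0, 1])
    (hB : (B : Matrix (Fin 2) (Fin 2) ℝ) =
      !![2 * Real.cos (Real.pi / (m : ℝ)), 1; -1, 0])
    (k : Subfield ℝ)
    (hk : k = Subfield.closure ({Real.cos (2 * Real.pi / (m : ℝ)),
      Real.cos (2 * Real.pi / (n : ℝ)),
      Real.cos (Real.pi / (m : ℝ)) * Real.cos (Real.pi / (n : ℝ))} : Set ℝ))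
    (s : ℝ) (hs : s = 2 * Real.cos (Real.pi / (n : ℝ)))
    (hsk : s ∉ k)
    (H : Subgroup (Matrix.SpecialLinearGroup (Fin 2) ℝ))
    (hHG : H ≤ Subgroup.closure ({A, B} : Set (Matrix.SpecialLinearGroup (Fin 2) ℝ)))
    (hpar : ∃ P ∈ H, IsParabolicMat (P : Matrix (Fin 2) (Fin 2) ℝ))
    (hodd : ∃ E ∈ H, IsOddElt k s (E : Matrix (Fin 2) (Fin 2) ℝ)) :
    ∃ N ∈ H, IsOddElt k s (N : Matrix (Fin 2) (Fin 2) ℝ) ∧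
      2 < |Matrix.trace ((N : Matrix (Fin 2) (Fin 2) ℝ))| := by
  -- basic membership facts
  have h2k : (2:ℝ) ∈ k := by
    rw [show (2:ℝ) = 1 + 1 by norm_num]; exact add_mem (one_mem k) (one_mem k)
  have hc2n : Real.cos (2 * Real.pi / (n:ℝ)) ∈ k := by
    rw [hk]; exact Subfield.subset_closure (by simp)
  have hc3 : Real.cos (Real.pi / (m:ℝ)) * Real.cos (Real.pi / (n:ℝ)) ∈ k := by
    rw [hk]; exact Subfield.subset_closure (by simp)
  have hs0 : s ≠ 0 := fun h => hsk (h ▸ zero_mem k)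
  have hcn0 : Real.cos (Real.pi / (n:ℝ)) ≠ 0 := by
    intro h; apply hs0; rw [hs, h]; ring
  have hs2 : s * s ∈ k := by
    have hid : s * s = 2 * Real.cos (2 * Real.pi / (n:ℝ)) + 2 := by
      rw [hs, show (2 * Real.pi / (n:ℝ)) = 2 * (Real.pi / (n:ℝ)) by ring, Real.cos_two_mul]
      ring
    rw [hid]
    exact add_mem (mul_mem h2k hc2n) h2k
  -- the element q with 2 cos(π/m) = s·q
  set q : ℝ := 4 * (Real.cos (Real.pi / (m:ℝ)) * Real.cos (Real.pi / (n:ℝ))) / (s * s) with hq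
  have hqk : q ∈ k := div_mem (mul_mem (by rw [show (4:ℝ) = 2 + 2 by norm_num]; exact add_mem h2k h2k) hc3) hs2
  have hqeq : 2 * Real.cos (Real.pi / (m:ℝ)) = s * q := by
    rw [hq, hs]; field_simp; ring
  -- key: s·y never equals a nonzero element of k
  have key : ∀ y ∈ k, ∀ c ∈ k, c ≠ 0 → s * y ≠ c := by
    intro y hy c hc hc0 h
    apply hsk
    have hy0 : y ≠ 0 := by rintro rfl; rw [mul_zero] at h; exact hc0 h.symm
    have : s = c / y := (eq_div_iff hy0).mpr h
    rw [this]; exact div_mem hc hy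
  -- parity of generators
  have hAe : IsEvenElt k s (A : Matrix (Fin 2) (Fin 2) ℝ) := by
    refine ⟨?_, ?_, ⟨q + 1, add_mem hqk (one_mem k), ?_⟩, ⟨0, zero_mem k, ?_⟩⟩ <;>
      simp [hA]
    · rw [mul_add, mul_one, ← hqeq, hs]
  have hBo : IsOddElt k s (B : Matrix (Fin 2) (Fin 2) ℝ) := by
    refine ⟨⟨q, hqk, ?_⟩, ⟨0, zero_mem k, ?_⟩, ?_, ?_⟩ <;> simp [hB]
    · exact hqeq
  -- parity dichotomy on the group
  have hdich : ∀ g ∈ Subgroup.closure ({A, B} : Set (Matrix.SpecialLinearGroup (Fin 2) ℝ)),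
      IsEvenElt k s (g : Matrix (Fin 2) (Fin 2) ℝ) ∨
      IsOddElt k s (g : Matrix (Fin 2) (Fin 2) ℝ) := by
    intro g hg
    refine Subgroup.closure_induction (fun x hx => ?_) ?_ ?_ ?_ hg
    · rcases hx with hx | hx
      · subst hx; exact Or.inl hAe
      · rw [Set.mem_singleton_iff] at hx; subst hx; exact Or.inr hBo
    · left; simpa using even_one k s
    · intro x y _ _ px py
      have hcoe : ((x * y : Matrix.SpecialLinearGroup (Fin 2) ℝ) : Matrix (Fin 2) (Fin 2) ℝ)
          = (x : Matrix (Fin 2) (Fin 2) ℝ) * (y : Matrix (Fin 2) (Fin 2) ℝ) := by simp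
      rw [hcoe]
      rcases px with px | px <;> rcases py with py | py
      · exact Or.inl (even_mul_even hs2 px py)
      · exact Or.inr (even_mul_odd hs2 px py)
      · exact Or.inr (odd_mul_even hs2 px py)
      · exact Or.inl (odd_mul_odd hs2 px py)
    · intro x _ px
      rcases px with px | px
      · exact Or.inl (even_inv x px)
      · exact Or.inr (odd_inv x px)
  -- trace of an odd element can't be ±2
  have odd_tr : ∀ M : Matrix (Fin 2) (Fin 2) ℝ, IsOddElt k s M →
      Matrix.trace M ≠ 2 ∧ Matrix.trace M ≠ -2 := by
    intro M hM
    obtain ⟨⟨y1, hy1, e1⟩, ⟨y2, hy2, e2⟩, _, _⟩ := hM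
    have htr : Matrix.trace M = s * (y1 + y2) := by
      rw [Matrix.trace_fin_two, e1, e2]; ring
    constructor
    · rw [htr]; exact key _ (add_mem hy1 hy2) 2 h2k (by norm_num)
    · rw [htr]; exact key _ (add_mem hy1 hy2) (-2) (neg_mem h2k) (by norm_num)
  obtain ⟨E, hEH, hEodd⟩ := hodd
  by_cases hbig : 2 < |Matrix.trace ((E : Matrix (Fin 2) (Fin 2) ℝ))|
  · exact ⟨E, hEH, hEodd, hbig⟩
  -- trace of E is strictly less than 2 in absolute value
  have hEle : |Matrix.trace ((E : Matrix (Fin 2) (Fin 2) ℝ))| ≤ 2 := not_lt.mp hbig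
  have hEtr_ne : |Matrix.trace ((E : Matrix (Fin 2) (Fin 2) ℝ))| ≠ 2 := by
    intro h
    rcases (abs_eq (by norm_num : (0:ℝ) ≤ 2)).mp h with h' | h'
    · exact (odd_tr _ hEodd).1 h'
    · exact (odd_tr _ hEodd).2 h'
  have hElt : |Matrix.trace ((E : Matrix (Fin 2) (Fin 2) ℝ))| < 2 :=
    lt_of_le_of_ne hEle hEtr_ne
  have hEsq : (Matrix.trace ((E : Matrix (Fin 2) (Fin 2) ℝ)))^2 < 4 := by
    have := abs_lt.mp hElt
    nlinarith [this.1, this.2]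
  have hdetE : (E : Matrix (Fin 2) (Fin 2) ℝ) 0 0 * (E : Matrix (Fin 2) (Fin 2) ℝ) 1 1
      - (E : Matrix (Fin 2) (Fin 2) ℝ) 0 1 * (E : Matrix (Fin 2) (Fin 2) ℝ) 1 0 = 1 := by
    have := E.2
    rwa [Matrix.det_fin_two] at this
  -- produce P₀ ∈ H with coe P₀ = 1 + Q, Q nilpotent nonzero traceless
  obtain ⟨P, hPH, hP1, hPm1, hPtr⟩ := hpar
  obtain ⟨P₀, hP₀H, Q, hcoeP, hQ2, hQ0, htrQ⟩ :
      ∃ P₀ ∈ H, ∃ Q : Matrix (Fin 2) (Fin 2) ℝ,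
        (P₀ : Matrix (Fin 2) (Fin 2) ℝ) = 1 + Q ∧ Q * Q = 0 ∧ Q ≠ 0 ∧
        Q 0 0 + Q 1 1 = 0 := by
    have hdetP : (P : Matrix (Fin 2) (Fin 2) ℝ) 0 0 * (P : Matrix (Fin 2) (Fin 2) ℝ) 1 1
        - (P : Matrix (Fin 2) (Fin 2) ℝ) 0 1 * (P : Matrix (Fin 2) (Fin 2) ℝ) 1 0 = 1 := by
      have := P.2
      rwa [Matrix.det_fin_two] at this
    rcases (abs_eq (by norm_num : (0:ℝ) ≤ 2)).mp hPtr with htr | htr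
    · -- trace P = 2
      refine ⟨P, hPH, (P : Matrix (Fin 2) (Fin 2) ℝ) - 1, by abel, ?_, ?_, ?_⟩
      · exact nilp_of_parabolic _ hdetP (by rw [Matrix.trace_fin_two] at htr; exact htr)
      · exact sub_ne_zero.mpr hP1
      · rw [Matrix.trace_fin_two] at htr
        simp only [Matrix.sub_apply, Matrix.one_apply_eq]
        linarith
    · -- trace P = -2
      set Qb : Matrix (Fin 2) (Fin 2) ℝ := -(P : Matrix (Fin 2) (Fin 2) ℝ) - 1 with hQb
      have htr' : Matrix.trace ((P : Matrix (Fin 2) (Fin 2) ℝ)) = -2 := htr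
      rw [Matrix.trace_fin_two] at htr'
      have hQb2 : Qb * Qb = 0 := by
        have : Qb = (-(P : Matrix (Fin 2) (Fin 2) ℝ)) - 1 := by rw [hQb]
        rw [this]
        apply nilp_of_parabolic
        · simp only [Matrix.neg_apply]; linarith [hdetP]
        · simp only [Matrix.neg_apply]; linarith
      have hQb0 : Qb ≠ 0 := by
        intro h
        apply hPm1
        rw [hQb, sub_eq_zero] at h
        exact neg_eq_iff_eq_neg.mp h
      refine ⟨P * P, mul_mem hPH hPH, (2:ℝ) • Qb, ?_, ?_, ?_, ?_⟩
      · have hPm : (P : Matrix (Fin 2) (Fin 2) ℝ) = -1 - Qb := by rw [hQb]; abel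
        have hcoe : ((P * P : Matrix.SpecialLinearGroup (Fin 2) ℝ) :
            Matrix (Fin 2) (Fin 2) ℝ) = (P : Matrix (Fin 2) (Fin 2) ℝ)
            * (P : Matrix (Fin 2) (Fin 2) ℝ) := by simp
        rw [hcoe, hPm]
        have hexp : (-1 - Qb) * (-1 - Qb) = 1 + Qb + Qb + Qb * Qb := by noncomm_ring
        rw [hexp, hQb2, two_smul]
        abel
      · rw [smul_mul_assoc, mul_smul_comm, hQb2, smul_zero, smul_zero]
      · exact smul_ne_zero two_ne_zero hQb0
      · simp only [Matrix.smul_apply, smul_eq_mul, hQb, Matrix.sub_apply, Matrix.neg_apply,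
          Matrix.one_apply_eq]
        linarith
  -- P₀ is even
  have hP₀tr : Matrix.trace ((P₀ : Matrix (Fin 2) (Fin 2) ℝ)) = 2 := by
    rw [hcoeP, Matrix.trace_add, Matrix.trace_one, Matrix.trace_fin_two]
    simp [htrQ]
  have hP₀even : IsEvenElt k s (P₀ : Matrix (Fin 2) (Fin 2) ℝ) := by
    rcases hdich P₀ (hHG hP₀H) with he | ho
    · exact he
    · exact absurd hP₀tr (odd_tr _ ho).1
  -- the degenerate case is impossible: trace(Q·E) ≠ 0
  have hc : Matrix.trace (Q * (E : Matrix (Fin 2) (Fin 2) ℝ)) ≠ 0 := by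
    intro h0
    rw [Matrix.trace_fin_two, mul_entry, mul_entry] at h0
    have hQ00 : Q 0 0 * Q 0 0 + Q 0 1 * Q 1 0 = 0 := by
      have := congr_fun (congr_fun hQ2 0) 0
      rwa [mul_entry, Matrix.zero_apply] at this
    have h4le : 4 ≤ (Matrix.trace ((E : Matrix (Fin 2) (Fin 2) ℝ)))^2 := by
      rw [Matrix.trace_fin_two]
      by_cases hab : Q 0 0 = 0 ∧ Q 0 1 = 0
      · -- then Q 1 0 ≠ 0
        have hd : Q 1 1 = 0 := by linarith [hab.1, htrQ]
        have hc0 : Q 1 0 ≠ 0 := by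
          intro hcc
          apply hQ0
          ext i j
          fin_cases i <;> fin_cases j <;>
            simp only [Matrix.zero_apply] <;> first
              | exact hab.1 | exact hab.2 | exact hcc | exact hd
        refine aux_root _ _ _ _ 0 (Q 1 0) hdetE (Or.inr hc0) ?_
        linear_combination (-(Q 1 0)) * h0 + (Q 1 0) * ((E : Matrix (Fin 2) (Fin 2) ℝ) 0 0) * hab.1
          + (Q 1 0) * ((E : Matrix (Fin 2) (Fin 2) ℝ) 1 0) * hab.2
          + (Q 1 0) * ((E : Matrix (Fin 2) (Fin 2) ℝ) 1 1) * hd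
      · have hv : Q 0 1 ≠ 0 ∨ -(Q 0 0) ≠ 0 := by
          rcases not_and_or.mp hab with h | h
          · right; simpa using h
          · left; exact h
        refine aux_root _ _ _ _ (Q 0 1) (-(Q 0 0)) hdetE hv ?_
        linear_combination (Q 0 1) * h0 - ((E : Matrix (Fin 2) (Fin 2) ℝ) 0 1) * hQ00
          - (Q 0 1) * ((E : Matrix (Fin 2) (Fin 2) ℝ) 1 1) * htrQ
    linarith [hEsq]
  -- choose a large power
  obtain ⟨j, hj⟩ := exists_nat_gt ((2 + |Matrix.trace ((E : Matrix (Fin 2) (Fin 2) ℝ))|)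
      / |Matrix.trace (Q * (E : Matrix (Fin 2) (Fin 2) ℝ))|)
  refine ⟨P₀ ^ j * E, mul_mem (pow_mem hP₀H j) hEH, ?_, ?_⟩
  · have hcoe : ((P₀ ^ j * E : Matrix.SpecialLinearGroup (Fin 2) ℝ) :
        Matrix (Fin 2) (Fin 2) ℝ) = ((P₀ : Matrix (Fin 2) (Fin 2) ℝ))^j
        * (E : Matrix (Fin 2) (Fin 2) ℝ) := by simp
    rw [hcoe]
    exact even_mul_odd hs2 (even_pow hs2 hP₀even j) hEodd
  · have hcoe : ((P₀ ^ j * E : Matrix.SpecialLinearGroup (Fin 2) ℝ) :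
        Matrix (Fin 2) (Fin 2) ℝ) = (1 + (j:ℝ) • Q) * (E : Matrix (Fin 2) (Fin 2) ℝ) := by
      have : ((P₀ ^ j * E : Matrix.SpecialLinearGroup (Fin 2) ℝ) :
          Matrix (Fin 2) (Fin 2) ℝ) = ((P₀ : Matrix (Fin 2) (Fin 2) ℝ))^j
          * (E : Matrix (Fin 2) (Fin 2) ℝ) := by simp
      rw [this, hcoeP, pow_one_add_nilp Q hQ2 j]
    rw [hcoe, trace_one_add_smul_mul]
    set T := Matrix.trace ((E : Matrix (Fin 2) (Fin 2) ℝ)) with hT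
    set c := Matrix.trace (Q * (E : Matrix (Fin 2) (Fin 2) ℝ)) with hcc
    have hcpos : 0 < |c| := abs_pos.mpr hc
    have hjc : 2 + |T| < (j:ℝ) * |c| := by
      rw [div_lt_iff₀ hcpos] at hj
      exact hj
    have habs : (j:ℝ) * |c| ≤ |T + (j:ℝ) * c| + |T| := by
      have h1 : |(j:ℝ) * c| = (j:ℝ) * |c| := by
        rw [abs_mul, Nat.abs_cast]
      calc (j:ℝ) * |c| = |(j:ℝ) * c| := h1.symm
        _ = |(T + (j:ℝ) * c) + (-T)| := by ring_nf
        _ ≤ |T + (j:ℝ) * c| + |(-T)| := abs_add_le _ _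
        _ = |T + (j:ℝ) * c| + |T| := by rw [abs_neg]
    linarith
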